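/- Fix a depth i with 1 ≤ i ≤ n and a c-label value x ∈ X. Then the symbol distribution Ω_i^D(x) = Σ_{P : A → B, c(e_i) = x} λ(P) · δ_{f(P)} (where e_i is the i-th edge of P) satisfies Ω_i^D(x) = Σ_{e : depth(fin(e)) = i, c(e) = x} λ(e) · ((α^D(init(e)) ⊞ g(e)) * β^D(fin(e))), where * denotes convolution of finitely supported functions. (Symbol distribution formula, part of Theorem 6 of the paper.) -/

import Mathlib

open Finset

/-- `IsPath einit efin u v P` means the list of edges `P = e₁⋯e_L` is a path from
vertex `u` to vertex `v`: `init e₁ = u`, `fin e_L = v` and `fin e_j = init e_{j+1}`;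
the empty list is a path from every vertex to itself. -/
def IsPath {V E : Type*} (einit efin : E → V) : V → V → List E → Prop
  | u, v, [] => u = v
  | u, v, e :: es => einit e = u ∧ IsPath einit efin (efin e) v es

/-- The λ-label of a path: the product of the λ-labels of its edges. -/
noncomputable def pathLam {E : Type*} (lam : E → ℝ) (P : List E) : ℝ :=
  (P.map lam).prod

/-- The value `f(P)` of a path: the sum of the values `g(e)` of its edges. -/
noncomputable def pathF {E : Type*} (g : E → ℝ) (P : List E) : ℝ :=
  (P.map g).sum

/-- The `m`-th forward numerator `α^(m)(v) = Σ_{P : A → v} f(P)^m · λ(P)`. -/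
noncomputable def alphaNum {V E : Type*} (lam g : E → ℝ)
    (paths : V → V → Finset (List E)) (A : V) (m : ℕ) (v : V) : ℝ :=
  ∑ P ∈ paths A v, pathF g P ^ m * pathLam lam P

/-- The `m`-th backward numerator `β^(m)(v) = Σ_{P : v → B} f(P)^m · λ(P)`. -/
noncomputable def betaNum {V E : Type*} (lam g : E → ℝ)
    (paths : V → V → Finset (List E)) (B : V) (m : ℕ) (v : V) : ℝ :=
  ∑ P ∈ paths v B, pathF g P ^ m * pathLam lam P

/-- The forward distribution `α^D(v) = Σ_{P : A → v} λ(P) · δ_{f(P)}`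
as a finitely supported function `ℝ →₀ ℝ`. -/
noncomputable def alphaDist {V E : Type*} (lam g : E → ℝ)
    (paths : V → V → Finset (List E)) (A : V) (v : V) : ℝ →₀ ℝ :=
  ∑ P ∈ paths A v, pathLam lam P • Finsupp.single (pathF g P) (1 : ℝ)

/-- The backward distribution `β^D(v) = Σ_{P : v → B} λ(P) · δ_{f(P)}`. -/
noncomputable def betaDist {V E : Type*} (lam g : E → ℝ)
    (paths : V → V → Finset (List E)) (B : V) (v : V) : ℝ →₀ ℝ :=
  ∑ P ∈ paths v B, pathLam lam P • Finsupp.single (pathF g P) (1 : ℝ)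

/-- Shift `a ⊞ b` of the domain of a finitely supported function `a` by `b`:
`(a ⊞ b)(u) = a(u − b)`, i.e. `Σ_u a(u) · δ_{u+b}`. -/
noncomputable def fshift (a : ℝ →₀ ℝ) (b : ℝ) : ℝ →₀ ℝ :=
  Finsupp.mapDomain (fun u => u + b) a

/-- Convolution of finitely supported functions: `(a * b)(u) = Σ_{s+t=u} a(s) · b(t)`,
so that `δ_s * δ_t = δ_{s+t}` (multiplication in `AddMonoidAlgebra ℝ ℝ`). -/
noncomputable def conv (a b : ℝ →₀ ℝ) : ℝ →₀ ℝ :=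
  a.sum fun s as => b.sum fun t bt => Finsupp.single (s + t) (as * bt)

section helpers
variable {V E : Type*} {einit efin : E → V}

lemma isPath_middle (e : E) (P₂ : List E) (v : V) : ∀ (P₁ : List E) (u : V),
    IsPath einit efin u v (P₁ ++ e :: P₂) ↔
      IsPath einit efin u (einit e) P₁ ∧ IsPath einit efin (efin e) v P₂ := by
  intro P₁
  induction P₁ with
  | nil => intro u; simp [IsPath, eq_comm]
  | cons f P₁ ih => intro u; simp [IsPath, ih, and_assoc]

lemma depth_of_isPath (depth : V → ℕ)
    (hdepth : ∀ e, depth (efin e) = depth (einit e) + 1) :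
    ∀ (P : List E) (u v : V), IsPath einit efin u v P →
      depth v = depth u + P.length := by
  intro P
  induction P with
  | nil => intro u v h; simp [IsPath] at h; simp [h]
  | cons e P ih =>
      intro u v h
      obtain ⟨h1, h2⟩ := h
      have := ih (efin e) v h2
      simp [this, hdepth, h1]
      omega

lemma depth_get (depth : V → ℕ)
    (hdepth : ∀ e, depth (efin e) = depth (einit e) + 1) :
    ∀ (P : List E) (u v : V), IsPath einit efin u v P →
      ∀ j (hj : j < P.length), depth (efin (P.get ⟨j, hj⟩)) = depth u + j + 1 := by
  intro P
  induction P with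
  | nil => intro u v h j hj; simp at hj
  | cons e P ih =>
      intro u v h j hj
      obtain ⟨h1, h2⟩ := h
      match j with
      | 0 => simp [hdepth, h1]
      | j + 1 =>
          have := ih (efin e) v h2 j (by simpa using hj)
          simp only [List.get_cons_succ] at *
          rw [this, hdepth, h1]
          omega

end helpers

/-- **Symbol distribution formula** (part of Theorem 6). For a depth `1 ≤ i ≤ n` and
c-label value `x`, the symbol distribution
`Ω_i^D(x) = Σ_{P : A → B, c(e_i) = x} λ(P) · δ_{f(P)}` (where the `i`-th edge `e_i` of a
path `P : A → B` is its unique edge with `depth(fin(e_i)) = i`) satisfies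
`Ω_i^D(x) = Σ_{e : depth(fin(e)) = i, c(e) = x} λ(e) · ((α^D(init(e)) ⊞ g(e)) * β^D(fin(e)))`. -/
theorem symbol_distribution {V E X : Type*} [Fintype V] [Fintype E] [DecidableEq X]
    (einit efin : E → V) (depth : V → ℕ) (n : ℕ)
    (hdepth : ∀ e, depth (efin e) = depth (einit e) + 1)
    (A : V) (hA : depth A = 0) (B : V) (hB : depth B = n)
    (lam g : E → ℝ) (c : E → X)
    (paths : V → V → Finset (List E))
    (hpaths : ∀ u v P, P ∈ paths u v ↔ IsPath einit efin u v P)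
    (i : ℕ) (hi1 : 1 ≤ i) (hin : i ≤ n) (x : X) :
    ∑ P ∈ (paths A B).filter (fun P => ∃ e ∈ P, depth (efin e) = i ∧ c e = x),
        pathLam lam P • Finsupp.single (pathF g P) (1 : ℝ) =
      ∑ e ∈ Finset.univ.filter (fun e => depth (efin e) = i ∧ c e = x),
        lam e • conv (fshift (alphaDist lam g paths A (einit e)) (g e))
          (betaDist lam g paths B (efin e)) := by
  classical
  -- general fact: conv is the AddMonoidAlgebra multiplication
  have hcv : ∀ a b : ℝ →₀ ℝ, conv a b =
      (AddMonoidAlgebra.ofCoeff a * AddMonoidAlgebra.ofCoeff b : AddMonoidAlgebra ℝ ℝ).coeff := by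
    intro a b
    rw [AddMonoidAlgebra.mul_def]
    simp only [conv, AddMonoidAlgebra.coeff_ofCoeff, AddMonoidAlgebra.coeff_finsuppSum,
      AddMonoidAlgebra.coeff_single]
  -- Step 1: rewrite each RHS summand as a double sum over pairs of paths
  have hconv : ∀ e : E,
      lam e • conv (fshift (alphaDist lam g paths A (einit e)) (g e))
          (betaDist lam g paths B (efin e)) =
      ∑ p ∈ (paths A (einit e)) ×ˢ (paths (efin e) B),
        pathLam lam (p.1 ++ e :: p.2) •
          Finsupp.single (pathF g (p.1 ++ e :: p.2)) (1 : ℝ) := by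
    intro e
    have hshift : fshift (alphaDist lam g paths A (einit e)) (g e) =
        ∑ P₁ ∈ paths A (einit e),
          Finsupp.single (pathF g P₁ + g e) (pathLam lam P₁) := by
      unfold fshift alphaDist
      rw [Finsupp.mapDomain_finset_sum]
      refine Finset.sum_congr rfl fun P₁ _ => ?_
      rw [Finsupp.mapDomain_smul, Finsupp.mapDomain_single, Finsupp.smul_single', mul_one]
    have hbeta : betaDist lam g paths B (efin e) =
        ∑ P₂ ∈ paths (efin e) B, Finsupp.single (pathF g P₂) (pathLam lam P₂) := by
      unfold betaDist
      refine Finset.sum_congr rfl fun P₂ _ => ?_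
      rw [Finsupp.smul_single', mul_one]
    rw [hcv, hshift, hbeta, AddMonoidAlgebra.ofCoeff_sum, AddMonoidAlgebra.ofCoeff_sum,
      Finset.sum_mul_sum, AddMonoidAlgebra.coeff_sum, Finset.smul_sum, Finset.sum_product]
    refine Finset.sum_congr rfl fun P₁ _ => ?_
    rw [AddMonoidAlgebra.coeff_sum, Finset.smul_sum]
    refine Finset.sum_congr rfl fun P₂ _ => ?_
    rw [AddMonoidAlgebra.ofCoeff_single, AddMonoidAlgebra.ofCoeff_single,
      AddMonoidAlgebra.single_mul_single, AddMonoidAlgebra.coeff_single,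
      Finsupp.smul_single', Finsupp.smul_single']
    have h1 : pathF g P₁ + g e + pathF g P₂ = pathF g (P₁ ++ e :: P₂) := by
      simp [pathF]; ring
    have h2 : lam e * (pathLam lam P₁ * pathLam lam P₂) = pathLam lam (P₁ ++ e :: P₂) * 1 := by
      simp [pathLam]; ring
    rw [h1, h2]
  rw [Finset.sum_congr rfl fun e _ => hconv e, Finset.sum_sigma']
  -- Step 2: the bijection
  have hlen : ∀ P ∈ (paths A B).filter
      (fun P => ∃ e ∈ P, depth (efin e) = i ∧ c e = x), i - 1 < P.length := by
    intro P hP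
    rw [Finset.mem_filter] at hP
    have := depth_of_isPath depth hdepth P A B ((hpaths _ _ _).1 hP.1)
    omega
  refine Finset.sum_bij' (i := fun P hP => ⟨P.get ⟨i - 1, hlen P hP⟩,
      (P.take (i - 1), P.drop i)⟩)
    (j := fun q _ => q.2.1 ++ q.1 :: q.2.2) ?_ ?_ ?_ ?_ ?_
  · -- hi : split lands in sigma set
    intro P hP
    rw [Finset.mem_filter] at hP
    obtain ⟨hPmem, e', he'P, hde', hce'⟩ := hP
    have hpath := (hpaths _ _ _).1 hPmem
    obtain ⟨⟨j, hj⟩, rfl⟩ := List.mem_iff_get.1 he'P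
    have hdj := depth_get depth hdepth P A B hpath j hj
    rw [hA] at hdj
    have hji : j = i - 1 := by omega
    subst hji
    have hsplit : P.take (i - 1) ++ P.get ⟨i - 1, hj⟩ :: P.drop i = P := by
      have : P.drop (i - 1) = P.get ⟨i - 1, hj⟩ :: P.drop i := by
        have h9 : i - 1 + 1 = i := by omega
        rw [List.drop_eq_getElem_cons hj, h9, List.get_eq_getElem]
      rw [← this, List.take_append_drop]
    rw [Finset.mem_sigma, Finset.mem_filter, Finset.mem_product]
    refine ⟨⟨Finset.mem_univ _, hde', hce'⟩, ?_, ?_⟩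
    · rw [hpaths]
      have := hpath
      rw [← hsplit, isPath_middle] at this
      exact this.1
    · rw [hpaths]
      have := hpath
      rw [← hsplit, isPath_middle] at this
      exact this.2
  · -- hj : append lands in filter set
    intro q hq
    rw [Finset.mem_sigma, Finset.mem_filter, Finset.mem_product] at hq
    obtain ⟨⟨-, hde, hce⟩, h1, h2⟩ := hq
    rw [hpaths] at h1 h2
    rw [Finset.mem_filter, hpaths]
    refine ⟨(isPath_middle _ _ _ _ _).2 ⟨h1, h2⟩, q.1, by simp, hde, hce⟩
  · -- left_inv : append (split P) = P
    intro P hP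
    have hj := hlen P hP
    have : P.drop (i - 1) = P.get ⟨i - 1, hj⟩ :: P.drop i := by
      have h9 : i - 1 + 1 = i := by omega
      rw [List.drop_eq_getElem_cons hj, h9, List.get_eq_getElem]
    simp only
    rw [← this, List.take_append_drop]
  · -- right_inv : split (append q) = q
    intro q hq
    rw [Finset.mem_sigma, Finset.mem_filter, Finset.mem_product] at hq
    obtain ⟨⟨-, hde, -⟩, h1, h2⟩ := hq
    rw [hpaths] at h1
    have hlen1 : q.2.1.length = i - 1 := by
      have := depth_of_isPath depth hdepth q.2.1 A (einit q.1) h1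
      have := hdepth q.1
      omega
    obtain ⟨e, P₁, P₂⟩ := q
    simp only at hlen1 ⊢
    have hi' : i = P₁.length + 1 := by omega
    subst hi'
    simp only [Nat.add_sub_cancel]
    congr 1
    · rw [List.get_eq_getElem, List.getElem_append_right (le_refl _)]
      simp
    · congr 1
      · exact List.take_left
      · rw [List.drop_append]
        simp
  · -- values agree
    intro P hP
    have hj := hlen P hP
    have : P.take (i - 1) ++ P.get ⟨i - 1, hj⟩ :: P.drop i = P := by
      have h : P.drop (i - 1) = P.get ⟨i - 1, hj⟩ :: P.drop i := by
        have h9 : i - 1 + 1 = i := by omega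
        rw [List.drop_eq_getElem_cons hj, h9, List.get_eq_getElem]
      rw [← h, List.take_append_drop]
    simp only
    rw [this]
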